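/- Let γ be a coloring of K_n^{6,4}. The function f(G',γ) = n' + rk_{Z²}(G',γ) − c' on edge-subsets is submodular: for any subgraphs G'' ⊆ G' and any colored edge ij ∉ E(G'), f(G''+ij,γ) − f(G'',γ) ≥ f(G'+ij,γ) − f(G',γ). -/

import Mathlib

open Finset

section Defs
variable {V E : Type} [Fintype V] [DecidableEq V] [Fintype E] [DecidableEq E]

/-- Signed incidence of edge `e` at vertex `v`. -/
def incid (th hd : E → V) (e : E) (v : V) : ℤ :=
  (if hd e = v then 1 else 0) - (if th e = v then 1 else 0)

/-- `x : E → ℤ` is a cycle (1-chain with zero boundary) supported on the edge set `S`. -/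
def IsCycle (th hd : E → V) (S : Finset E) (x : E → ℤ) : Prop :=
  (∀ e ∉ S, x e = 0) ∧ ∀ v : V, ∑ e, x e * incid th hd e v = 0

/-- Signed color-sum of a chain. -/
def rho (γ : E → ℤ × ℤ) (x : E → ℤ) : ℤ × ℤ := ∑ e, x e • γ e

def q2 (p : ℤ × ℤ) : ℚ × ℚ := ((p.1 : ℚ), (p.2 : ℚ))

/-- The ℤ²-rank of the colored subgraph with edge set `S`. -/
noncomputable def zrank (th hd : E → V) (γ : E → ℤ × ℤ) (S : Finset E) : ℕ :=
  Module.finrank ℚ (Submodule.span ℚ (q2 '' (rho γ '' {x | IsCycle th hd S x})))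

/-- Adjacency via an edge in `S`. -/
def adjS (th hd : E → V) (S : Finset E) (u v : V) : Prop :=
  ∃ e ∈ S, (th e = u ∧ hd e = v) ∨ (th e = v ∧ hd e = u)

/-- Vertices spanned by the edge set `S`. -/
def verts (th hd : E → V) (S : Finset E) : Finset V := S.image th ∪ S.image hd

/-- Number of connected components of the subgraph induced by the edge set `S`
(on the vertices it spans). -/
noncomputable def ncomp (th hd : E → V) (S : Finset E) : ℕ :=
  Nat.card (Quotient (Relation.EqvGen.setoid
    (fun a b : {v : V // v ∈ verts th hd S} => adjS th hd S a.1 b.1)))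

/-- The subgraph with edge set `S` is connected and spans all vertices. -/
def Conn (th hd : E → V) (S : Finset E) : Prop :=
  ∀ u v : V, Relation.EqvGen (adjS th hd S) u v

/-- The function `f(G') = n' + rk_{ℤ²}(G') − c'`. -/
noncomputable def fZ (th hd : E → V) (γ : E → ℤ × ℤ) (S : Finset E) : ℤ :=
  ((verts th hd S).card : ℤ) + (zrank th hd γ S : ℤ) - (ncomp th hd S : ℤ)

end Defs

/-- Edge set of the complete multigraph `K_n^{6,4}`. -/
def KE (n : ℕ) : Type :=
  ({p : Fin n × Fin n // p.1 < p.2} × Fin 6) ⊕ (Fin n × Fin 4)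

instance (n : ℕ) : Fintype (KE n) := by unfold KE; infer_instance
instance (n : ℕ) : DecidableEq (KE n) := by unfold KE; infer_instance

def Kt (n : ℕ) : KE n → Fin n := Sum.elim (fun q => q.1.1.1) (fun q => q.1)
def Kh (n : ℕ) : KE n → Fin n := Sum.elim (fun q => q.1.1.2) (fun q => q.1)

section Aux
variable {V E : Type} [Fintype V] [DecidableEq V] [Fintype E] [DecidableEq E]
variable (th hd : E → V) (γ : E → ℤ × ℤ)

/-- number of EqvGen classes on the full vertex set -/
noncomputable def NF (th hd : E → V) (S : Finset E) : ℕ :=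
  Nat.card (Quotient (Relation.EqvGen.setoid (adjS th hd S)))

lemma adjS_mono {S T : Finset E} (h : S ⊆ T) {u v : V} (ha : adjS th hd S u v) :
    adjS th hd T u v := by
  obtain ⟨e, he, hor⟩ := ha; exact ⟨e, h he, hor⟩

lemma adjS_verts {S : Finset E} {u v : V} (ha : adjS th hd S u v) :
    u ∈ verts th hd S ∧ v ∈ verts th hd S := by
  obtain ⟨e, he, hor⟩ := ha
  rcases hor with ⟨h1, h2⟩ | ⟨h1, h2⟩ <;> subst h1 <;> subst h2 <;>
    refine ⟨?_, ?_⟩ <;> simp only [verts, Finset.mem_union, Finset.mem_image]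
  · exact Or.inl ⟨e, he, rfl⟩
  · exact Or.inr ⟨e, he, rfl⟩
  · exact Or.inr ⟨e, he, rfl⟩
  · exact Or.inl ⟨e, he, rfl⟩

lemma eqvGen_verts {S : Finset E} {u v : V}
    (h : Relation.EqvGen (adjS th hd S) u v) :
    u = v ∨ (u ∈ verts th hd S ∧ v ∈ verts th hd S) := by
  induction h with
  | rel x y hxy => exact Or.inr (adjS_verts th hd hxy)
  | refl x => exact Or.inl rfl
  | symm x y _ ih => rcases ih with rfl | ⟨h1, h2⟩; exacts [Or.inl rfl, Or.inr ⟨h2, h1⟩]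
  | trans x y z _ _ ih1 ih2 =>
    rcases ih1 with rfl | ⟨h1, h2⟩
    · exact ih2
    · rcases ih2 with rfl | ⟨h3, h4⟩
      · exact Or.inr ⟨h1, h2⟩
      · exact Or.inr ⟨h1, h4⟩

lemma eqvGen_subtype {S : Finset E} {u v : V}
    (h : Relation.EqvGen (adjS th hd S) u v) :
    ∀ (hu : u ∈ verts th hd S) (hv : v ∈ verts th hd S),
      Relation.EqvGen (fun a b : {x : V // x ∈ verts th hd S} => adjS th hd S a.1 b.1)
        ⟨u, hu⟩ ⟨v, hv⟩ := by
  induction h with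
  | rel x y hxy => exact fun hu hv => Relation.EqvGen.rel _ _ hxy
  | refl x => exact fun hu hv => Relation.EqvGen.refl _
  | symm x y _ ih => exact fun hu hv => Relation.EqvGen.symm _ _ (ih hv hu)
  | trans x y z h1 _ ih1 ih2 =>
    intro hu hv
    rcases eqvGen_verts th hd h1 with rfl | ⟨_, hy⟩
    · exact ih2 hu hv
    · exact Relation.EqvGen.trans _ _ _ (ih1 hu hy) (ih2 hy hv)

lemma eqvGen_of_subtype {S : Finset E} {a b : {v : V // v ∈ verts th hd S}}
    (h : Relation.EqvGen (fun a b : {v : V // v ∈ verts th hd S} => adjS th hd S a.1 b.1) a b) :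
    Relation.EqvGen (adjS th hd S) a.1 b.1 := by
  induction h with
  | rel x y hxy => exact .rel _ _ hxy
  | refl x => exact .refl _
  | symm x y _ ih => exact .symm _ _ ih
  | trans x y z _ _ ih1 ih2 => exact .trans _ _ _ ih1 ih2

noncomputable def compEquiv (S : Finset E) :
    Quotient (Relation.EqvGen.setoid (adjS th hd S)) ≃
      (Quotient (Relation.EqvGen.setoid
        (fun a b : {v : V // v ∈ verts th hd S} => adjS th hd S a.1 b.1)) ⊕
       {v : V // v ∉ verts th hd S}) where
  toFun := Quotient.lift (fun v =>
    if h : v ∈ verts th hd S then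
      Sum.inl (Quotient.mk _ (⟨v, h⟩ : {x : V // x ∈ verts th hd S}))
    else Sum.inr ⟨v, h⟩) (by
      intro u v huv
      rcases eqvGen_verts th hd huv with rfl | ⟨hu, hv⟩
      · rfl
      · simp only [dif_pos hu, dif_pos hv]
        exact congrArg Sum.inl (Quotient.sound (eqvGen_subtype th hd huv hu hv)))
  invFun := Sum.elim
    (Quotient.lift (fun x => Quotient.mk (Relation.EqvGen.setoid (adjS th hd S)) x.1)
      (fun a b hab => Quotient.sound (eqvGen_of_subtype th hd hab)))
    (fun v => Quotient.mk _ v.1)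
  left_inv := by
    refine Quotient.ind (fun v => ?_)
    by_cases h : v ∈ verts th hd S <;> simp [h]
  right_inv := by
    rintro (q | ⟨v, hv⟩)
    · refine Quotient.inductionOn q (fun x => ?_)
      simp [x.2]
    · simp [hv]

lemma NF_add_card (S : Finset E) :
    NF th hd S + (verts th hd S).card = ncomp th hd S + Fintype.card V := by
  have h1 : NF th hd S = ncomp th hd S + Nat.card {v : V // v ∉ verts th hd S} := by
    rw [NF, Nat.card_congr (compEquiv th hd S), Nat.card_sum]; rfl
  have h2 : Nat.card {v : V // v ∉ verts th hd S}
      = Fintype.card V - (verts th hd S).card := by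
    rw [Nat.card_eq_fintype_card]
    have := Fintype.card_subtype_compl (p := fun v : V => v ∈ verts th hd S)
    simpa [Fintype.card_coe] using this
  have h3 : (verts th hd S).card ≤ Fintype.card V := Finset.card_le_univ _
  omega

lemma eqvGen_insert_iff {S : Finset E} {e : E} {u v : V} :
    Relation.EqvGen (adjS th hd (insert e S)) u v ↔
      (Relation.EqvGen (adjS th hd S) u v ∨
       (Relation.EqvGen (adjS th hd S) u (th e) ∧ Relation.EqvGen (adjS th hd S) (hd e) v) ∨
       (Relation.EqvGen (adjS th hd S) u (hd e) ∧ Relation.EqvGen (adjS th hd S) (th e) v)) := by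
  constructor
  · intro h
    induction h with
    | rel x y hxy =>
      obtain ⟨f, hf, hor⟩ := hxy
      rcases Finset.mem_insert.mp hf with rfl | hf
      · rcases hor with ⟨h1, h2⟩ | ⟨h1, h2⟩
        · subst h1; subst h2; exact Or.inr (Or.inl ⟨.refl _, .refl _⟩)
        · subst h1; subst h2; exact Or.inr (Or.inr ⟨.refl _, .refl _⟩)
      · exact Or.inl (.rel _ _ ⟨f, hf, hor⟩)
    | refl x => exact Or.inl (.refl _)
    | symm x y _ ih =>
      rcases ih with h | ⟨h1, h2⟩ | ⟨h1, h2⟩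
      · exact Or.inl (.symm _ _ h)
      · exact Or.inr (Or.inr ⟨.symm _ _ h2, .symm _ _ h1⟩)
      · exact Or.inr (Or.inl ⟨.symm _ _ h2, .symm _ _ h1⟩)
    | trans x y z _ _ ih1 ih2 =>
      rcases ih1 with h | ⟨h1, h2⟩ | ⟨h1, h2⟩ <;>
        rcases ih2 with h' | ⟨h1', h2'⟩ | ⟨h1', h2'⟩
      · exact Or.inl (.trans _ _ _ h h')
      · exact Or.inr (Or.inl ⟨.trans _ _ _ h h1', h2'⟩)
      · exact Or.inr (Or.inr ⟨.trans _ _ _ h h1', h2'⟩)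
      · exact Or.inr (Or.inl ⟨h1, .trans _ _ _ h2 h'⟩)
      · -- x~a, b~y ; y~a, b~z : a~b so x~a~b~z
        have hab : Relation.EqvGen (adjS th hd S) (th e) (hd e) :=
          .symm _ _ (.trans _ _ _ h2 h1')
        exact Or.inl (.trans _ _ _ h1 (.trans _ _ _ hab h2'))
      · exact Or.inl (.trans _ _ _ h1 h2')
      · exact Or.inr (Or.inr ⟨h1, .trans _ _ _ h2 h'⟩)
      · exact Or.inl (.trans _ _ _ h1 h2')
      · have hab : Relation.EqvGen (adjS th hd S) (hd e) (th e) :=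
          .symm _ _ (.trans _ _ _ h2 h1')
        exact Or.inl (.trans _ _ _ h1 (.trans _ _ _ hab h2'))
  · have mono : ∀ {p q : V}, Relation.EqvGen (adjS th hd S) p q →
        Relation.EqvGen (adjS th hd (insert e S)) p q := fun h =>
      Relation.EqvGen.mono (fun a b => adjS_mono th hd (Finset.subset_insert e S)) _ _ h
    have hab : Relation.EqvGen (adjS th hd (insert e S)) (th e) (hd e) :=
      .rel _ _ ⟨e, Finset.mem_insert_self e S, Or.inl ⟨rfl, rfl⟩⟩
    rintro (h | ⟨h1, h2⟩ | ⟨h1, h2⟩)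
    · exact mono h
    · exact .trans _ _ _ (mono h1) (.trans _ _ _ hab (mono h2))
    · exact .trans _ _ _ (mono h1) (.trans _ _ _ (.symm _ _ hab) (mono h2))

lemma NF_insert_of_rel {S : Finset E} {e : E}
    (hab : Relation.EqvGen (adjS th hd S) (th e) (hd e)) :
    NF th hd (insert e S) = NF th hd S := by
  refine Nat.card_congr (Quotient.congrRight fun u v => ?_)
  show Relation.EqvGen (adjS th hd (insert e S)) u v ↔ Relation.EqvGen (adjS th hd S) u v
  rw [eqvGen_insert_iff]
  constructor
  · rintro (h | ⟨h1, h2⟩ | ⟨h1, h2⟩)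
    · exact h
    · exact .trans _ _ _ h1 (.trans _ _ _ hab h2)
    · exact .trans _ _ _ h1 (.trans _ _ _ (.symm _ _ hab) h2)
  · exact Or.inl

lemma NF_insert_of_not_rel {S : Finset E} {e : E}
    (hab : ¬ Relation.EqvGen (adjS th hd S) (th e) (hd e)) :
    NF th hd S = NF th hd (insert e S) + 1 := by
  classical
  have hne : (Quotient.mk (Relation.EqvGen.setoid (adjS th hd S)) (th e)) ≠ Quotient.mk (Relation.EqvGen.setoid (adjS th hd S)) (hd e) := fun h => hab (Quotient.exact h)
  have hmono : ∀ {p q : V}, Relation.EqvGen (adjS th hd S) p q →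
      Relation.EqvGen (adjS th hd (insert e S)) p q := fun h =>
    Relation.EqvGen.mono (fun a b => adjS_mono th hd (Finset.subset_insert e S)) _ _ h
  let F : Quotient (Relation.EqvGen.setoid (adjS th hd (insert e S))) ≃ {x : Quotient (Relation.EqvGen.setoid (adjS th hd S)) // x ≠ Quotient.mk (Relation.EqvGen.setoid (adjS th hd S)) (hd e)} := {
    toFun := Quotient.lift (fun v =>
      if h : Quotient.mk (Relation.EqvGen.setoid (adjS th hd S)) v = Quotient.mk (Relation.EqvGen.setoid (adjS th hd S)) (hd e) then ⟨Quotient.mk (Relation.EqvGen.setoid (adjS th hd S)) (th e), hne⟩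
      else ⟨Quotient.mk (Relation.EqvGen.setoid (adjS th hd S)) v, h⟩) (by
        intro u v huv
        rcases (eqvGen_insert_iff th hd).mp huv with h | ⟨h1, h2⟩ | ⟨h1, h2⟩
        · have h' : Quotient.mk (Relation.EqvGen.setoid (adjS th hd S)) u = Quotient.mk (Relation.EqvGen.setoid (adjS th hd S)) v := Quotient.sound h
          simp [h']
        · have hu : Quotient.mk (Relation.EqvGen.setoid (adjS th hd S)) u = Quotient.mk (Relation.EqvGen.setoid (adjS th hd S)) (th e) := Quotient.sound h1
          have hv : Quotient.mk (Relation.EqvGen.setoid (adjS th hd S)) v = Quotient.mk (Relation.EqvGen.setoid (adjS th hd S)) (hd e) := Quotient.sound (.symm _ _ h2)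
          beta_reduce
          rw [dif_neg (by rw [hu]; exact hne), dif_pos hv]
          exact Subtype.ext hu
        · have hu : Quotient.mk (Relation.EqvGen.setoid (adjS th hd S)) u = Quotient.mk (Relation.EqvGen.setoid (adjS th hd S)) (hd e) := Quotient.sound h1
          have hv : Quotient.mk (Relation.EqvGen.setoid (adjS th hd S)) v = Quotient.mk (Relation.EqvGen.setoid (adjS th hd S)) (th e) := Quotient.sound (.symm _ _ h2)
          beta_reduce
          rw [dif_pos hu, dif_neg (by rw [hv]; exact hne)]
          exact Subtype.ext hv.symm)
    invFun := fun x => Quotient.lift (fun v => Quotient.mk (Relation.EqvGen.setoid (adjS th hd (insert e S))) v)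
      (fun a b hab' => Quotient.sound (hmono (show Relation.EqvGen (adjS th hd S) a b from hab'))) x.1
    left_inv := by
      refine Quotient.ind (fun v => ?_)
      by_cases h : Quotient.mk (Relation.EqvGen.setoid (adjS th hd S)) v = Quotient.mk (Relation.EqvGen.setoid (adjS th hd S)) (hd e)
      · simp only [Quotient.lift_mk, dif_pos h]
        refine Quotient.sound ?_
        have h1 : Relation.EqvGen (adjS th hd (insert e S)) (th e) (hd e) :=
          .rel _ _ ⟨e, Finset.mem_insert_self e S, Or.inl ⟨rfl, rfl⟩⟩
        exact .trans _ _ _ h1 (hmono (Quotient.exact h.symm))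
      · simp only [Quotient.lift_mk, dif_neg h]
    right_inv := by
      rintro ⟨q, hq⟩
      obtain ⟨v, rfl⟩ := Quotient.exists_rep q
      simp only [Quotient.lift_mk]
      rw [dif_neg hq]
  }
  have h1 : NF th hd S
      = Nat.card {x : Quotient (Relation.EqvGen.setoid (adjS th hd S)) // x ≠ Quotient.mk (Relation.EqvGen.setoid (adjS th hd S)) (hd e)} + 1 := by
    rw [NF, ← Nat.card_congr (Equiv.optionSubtypeNe (Quotient.mk (Relation.EqvGen.setoid (adjS th hd S)) (hd e))), Finite.card_option]
  rw [h1, Nat.card_congr F.symm]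
  rfl

noncomputable def Wsp (th hd : E → V) (γ : E → ℤ × ℤ) (S : Finset E) : Submodule ℚ (ℚ × ℚ) :=
  Submodule.span ℚ (q2 '' (rho γ '' {x | IsCycle th hd S x}))

lemma zrank_eq_Wsp (S : Finset E) : zrank th hd γ S = Module.finrank ℚ (Wsp th hd γ S) := rfl

lemma isCycle_mono {S T : Finset E} (hST : S ⊆ T) {x : E → ℤ}
    (hx : IsCycle th hd S x) : IsCycle th hd T x :=
  ⟨fun f hf => hx.1 f (fun h => hf (hST h)), hx.2⟩

lemma Wsp_mono {S T : Finset E} (hST : S ⊆ T) : Wsp th hd γ S ≤ Wsp th hd γ T :=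
  Submodule.span_mono (Set.image_mono (Set.image_mono (fun x hx => isCycle_mono th hd hST hx)))

lemma q2_add (p q : ℤ × ℤ) : q2 (p + q) = q2 p + q2 q := by
  simp [q2, Prod.ext_iff]

lemma q2_zsmul (n : ℤ) (p : ℤ × ℤ) : q2 (n • p) = (n : ℚ) • q2 p := by
  simp [q2, Prod.ext_iff, smul_eq_mul]

lemma sum_chi (χ : V → ℤ) (f : E) :
    ∑ v, χ v * incid th hd f v = χ (hd f) - χ (th f) := by
  simp only [incid, mul_sub, Finset.sum_sub_distrib, mul_ite, mul_one, mul_zero]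
  rw [Finset.sum_ite_eq, Finset.sum_ite_eq]
  simp

lemma cycle_apply_eq_zero_of_not_rel {S : Finset E} {e : E}
    (hnr : ¬ Relation.EqvGen (adjS th hd S) (th e) (hd e)) {x : E → ℤ}
    (hx : IsCycle th hd (insert e S) x) : x e = 0 := by
  classical
  have he : e ∉ S := fun he => hnr (.rel _ _ ⟨e, he, Or.inl ⟨rfl, rfl⟩⟩)
  set χ : V → ℤ := fun v => if Relation.EqvGen (adjS th hd S) (th e) v then 1 else 0 with hχ
  have h0 : ∑ v, χ v * (∑ f, x f * incid th hd f v) = 0 := by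
    simp [hx.2]
  have hswap : ∑ v, χ v * (∑ f, x f * incid th hd f v)
      = ∑ f, x f * (χ (hd f) - χ (th f)) := by
    have hterm : ∀ f, ∑ v, χ v * (x f * incid th hd f v) = x f * (χ (hd f) - χ (th f)) := by
      intro f
      rw [← sum_chi th hd χ f, Finset.mul_sum]
      exact Finset.sum_congr rfl (fun v _ => by ring)
    simp_rw [Finset.mul_sum]
    rw [Finset.sum_comm]
    exact Finset.sum_congr rfl (fun f _ => hterm f)
  have hsum : ∑ f, x f * (χ (hd f) - χ (th f)) = - x e := by
    rw [← Finset.sum_subset (Finset.subset_univ (insert e S))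
      (fun f _ hf => by rw [hx.1 f hf, zero_mul])]
    rw [Finset.sum_insert he]
    have hSzero : ∀ f ∈ S, x f * (χ (hd f) - χ (th f)) = 0 := by
      intro f hf
      have hiff : Relation.EqvGen (adjS th hd S) (th e) (hd f) ↔
          Relation.EqvGen (adjS th hd S) (th e) (th f) :=
        ⟨fun h => Relation.EqvGen.trans _ _ _ h
            (Relation.EqvGen.symm _ _ (.rel _ _ ⟨f, hf, Or.inl ⟨rfl, rfl⟩⟩)),
         fun h => Relation.EqvGen.trans _ _ _ h (.rel _ _ ⟨f, hf, Or.inl ⟨rfl, rfl⟩⟩)⟩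
      have : χ (hd f) = χ (th f) := by
        simp only [hχ]
        rw [if_congr hiff rfl rfl]
      rw [this, sub_self, mul_zero]
    rw [Finset.sum_eq_zero hSzero, add_zero]
    have h1 : χ (hd e) = 0 := by simp only [hχ]; rw [if_neg hnr]
    have h2 : χ (th e) = 1 := by simp only [hχ]; rw [if_pos (.refl _)]
    rw [h1, h2]; ring
  have := h0; rw [hswap, hsum] at this; omega

lemma wsp_insert_of_not_rel {S : Finset E} {e : E}
    (hnr : ¬ Relation.EqvGen (adjS th hd S) (th e) (hd e)) :
    Wsp th hd γ (insert e S) = Wsp th hd γ S := by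
  apply le_antisymm _ (Wsp_mono th hd γ (Finset.subset_insert e S))
  apply Submodule.span_mono
  refine Set.image_mono (Set.image_mono ?_)
  intro x hx
  refine ⟨fun f hf => ?_, hx.2⟩
  by_cases hfe : f = e
  · subst hfe; exact cycle_apply_eq_zero_of_not_rel th hd hnr hx
  · exact hx.1 f (by simp [hf, hfe])

lemma exists_path {S : Finset E} {u v : V}
    (h : Relation.EqvGen (adjS th hd S) u v) :
    ∃ x : E → ℤ, (∀ f ∉ S, x f = 0) ∧
      ∀ w, ∑ f, x f * incid th hd f w
        = ((if v = w then 1 else 0) : ℤ) - (if u = w then 1 else 0) := by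
  induction h with
  | rel p q hpq =>
    obtain ⟨f, hf, hor⟩ := hpq
    rcases hor with ⟨h1, h2⟩ | ⟨h1, h2⟩
    · refine ⟨fun g => if g = f then 1 else 0, fun g hg => ?_, fun w => ?_⟩
      · show (if g = f then (1:ℤ) else 0) = 0
        exact if_neg (fun h => hg (by rw [h]; exact hf))
      · show ∑ g, (if g = f then (1:ℤ) else 0) * incid th hd g w = _
        simp only [ite_mul, one_mul, zero_mul, Finset.sum_ite_eq', Finset.mem_univ, if_true]
        simp only [incid, h1, h2]
    · refine ⟨fun g => if g = f then -1 else 0, fun g hg => ?_, fun w => ?_⟩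
      · show (if g = f then (-1:ℤ) else 0) = 0
        exact if_neg (fun h => hg (by rw [h]; exact hf))
      · show ∑ g, (if g = f then (-1:ℤ) else 0) * incid th hd g w = _
        simp only [ite_mul, neg_mul, one_mul, zero_mul, Finset.sum_ite_eq', Finset.mem_univ,
          if_true]
        simp only [incid, h1, h2]
        ring
  | refl p => exact ⟨0, fun f _ => rfl, fun w => by simp⟩
  | symm p q _ ih =>
    obtain ⟨x, hs, hb⟩ := ih
    refine ⟨-x, fun f hf => by simp [hs f hf], fun w => ?_⟩
    have := hb w
    simp only [Pi.neg_apply, neg_mul, Finset.sum_neg_distrib]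
    rw [this]; ring
  | trans p q r _ _ ih1 ih2 =>
    obtain ⟨x, hs1, hb1⟩ := ih1
    obtain ⟨y, hs2, hb2⟩ := ih2
    refine ⟨x + y, fun f hf => by simp [hs1 f hf, hs2 f hf], fun w => ?_⟩
    simp only [Pi.add_apply, add_mul, Finset.sum_add_distrib]
    rw [hb1 w, hb2 w]; ring

lemma exists_fund {S : Finset E} {e : E} (he : e ∉ S)
    (h : Relation.EqvGen (adjS th hd S) (th e) (hd e)) :
    ∃ C : E → ℤ, IsCycle th hd (insert e S) C ∧ C e = 1 := by
  obtain ⟨x, hs, hb⟩ := exists_path th hd (Relation.EqvGen.symm _ _ h)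
  refine ⟨fun f => (if f = e then 1 else 0) + x f, ⟨fun f hf => ?_, fun w => ?_⟩, ?_⟩
  · show (if f = e then (1:ℤ) else 0) + x f = 0
    rw [if_neg (fun h' => hf (by simp [h'])), hs f (fun h' => hf (by simp [h'])), add_zero]
  · show ∑ f, ((if f = e then (1:ℤ) else 0) + x f) * incid th hd f w = 0
    have hsplit : ∀ f : E, ((if f = e then (1:ℤ) else 0) + x f) * incid th hd f w
        = (if f = e then (1:ℤ) else 0) * incid th hd f w + x f * incid th hd f w :=
      fun f => by ring
    simp_rw [hsplit]
    rw [Finset.sum_add_distrib, hb w]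
    simp only [ite_mul, one_mul, zero_mul, Finset.sum_ite_eq', Finset.mem_univ, if_true]
    simp only [incid]
    ring
  · show (if e = e then (1:ℤ) else 0) + x e = 1
    rw [if_pos rfl, hs e he, add_zero]

lemma wsp_insert_eq_sup {S : Finset E} {e : E} {C : E → ℤ}
    (hC : IsCycle th hd (insert e S) C) (hCe : C e = 1) :
    Wsp th hd γ (insert e S)
      = Wsp th hd γ S ⊔ Submodule.span ℚ {q2 (rho γ C)} := by
  apply le_antisymm
  · rw [Wsp, Submodule.span_le]
    rintro _ ⟨_, ⟨x, hx, rfl⟩, rfl⟩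
    have hz : IsCycle th hd S (fun f => x f - x e * C f) := by
      constructor
      · intro f hf
        show x f - x e * C f = 0
        by_cases hfe : f = e
        · subst hfe; simp [hCe]
        · rw [hx.1 f (by simp [hf, hfe]), hC.1 f (by simp [hf, hfe])]; ring
      · intro w
        show ∑ f, (x f - x e * C f) * incid th hd f w = 0
        have : ∀ f : E, (x f - x e * C f) * incid th hd f w
            = x f * incid th hd f w - x e * (C f * incid th hd f w) := fun f => by ring
        simp_rw [this]
        rw [Finset.sum_sub_distrib, hx.2 w, ← Finset.mul_sum, hC.2 w]; ring
    have hdec : q2 (rho γ x)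
        = q2 (rho γ (fun f => x f - x e * C f)) + (x e : ℚ) • q2 (rho γ C) := by
      have h1 : rho γ x = rho γ (fun f => x f - x e * C f) + x e • rho γ C := by
        simp only [rho, Finset.smul_sum, sub_smul, mul_smul, Finset.sum_sub_distrib]
        abel
      rw [h1, q2_add, q2_zsmul]
    rw [hdec]
    refine Submodule.add_mem _ (le_sup_left (α := Submodule ℚ (ℚ × ℚ)) ?_)
      (Submodule.smul_mem _ _ (le_sup_right (α := Submodule ℚ (ℚ × ℚ)) ?_))
    · exact Submodule.subset_span ⟨_, ⟨_, hz, rfl⟩, rfl⟩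
    · exact Submodule.subset_span rfl
  · refine sup_le (Wsp_mono th hd γ (Finset.subset_insert e S)) ?_
    rw [Submodule.span_le, Set.singleton_subset_iff]
    exact Submodule.subset_span ⟨_, ⟨_, hC, rfl⟩, rfl⟩

lemma zrank_insert_le {S : Finset E} {e : E} {C : E → ℤ}
    (hC : IsCycle th hd (insert e S) C) (hCe : C e = 1) :
    zrank th hd γ (insert e S) ≤ zrank th hd γ S + 1 := by
  rw [zrank_eq_Wsp, zrank_eq_Wsp, wsp_insert_eq_sup th hd γ hC hCe]
  refine le_trans (Submodule.finrank_add_le_finrank_add_finrank _ _) ?_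
  have h1 : Module.finrank ℚ (Submodule.span ℚ {q2 (rho γ C)}) ≤ 1 := by
    by_cases hv : q2 (rho γ C) = 0
    · rw [hv, Submodule.span_zero_singleton]; simp
    · rw [finrank_span_singleton hv]
  omega

lemma zrank_insert_eq {S : Finset E} {e : E} {C : E → ℤ}
    (hC : IsCycle th hd (insert e S) C) (hCe : C e = 1)
    (hmem : q2 (rho γ C) ∈ Wsp th hd γ S) :
    zrank th hd γ (insert e S) = zrank th hd γ S := by
  have hsup : Wsp th hd γ S ⊔ Submodule.span ℚ {q2 (rho γ C)} = Wsp th hd γ S := by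
    rw [sup_eq_left, Submodule.span_le, Set.singleton_subset_iff]
    exact hmem
  rw [zrank_eq_Wsp, zrank_eq_Wsp, wsp_insert_eq_sup th hd γ hC hCe, hsup]

lemma zrank_insert_ge {S : Finset E} {e : E} {C : E → ℤ}
    (hC : IsCycle th hd (insert e S) C) (hCe : C e = 1)
    (hmem : q2 (rho γ C) ∉ Wsp th hd γ S) :
    zrank th hd γ S + 1 ≤ zrank th hd γ (insert e S) := by
  have hlt : Wsp th hd γ S < Wsp th hd γ (insert e S) := by
    refine lt_of_le_of_ne (Wsp_mono th hd γ (Finset.subset_insert e S)) (fun h => hmem ?_)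
    rw [h]
    exact Submodule.subset_span ⟨_, ⟨_, hC, rfl⟩, rfl⟩
  have := Submodule.finrank_lt_finrank_of_lt hlt
  rw [zrank_eq_Wsp, zrank_eq_Wsp]
  omega

end Aux

/-- The function `f(G') = n' + rk_{ℤ²}(G') − c'` on edge-subsets of `K_n^{6,4}` is
submodular: for subgraphs `S'' ⊆ S'` and an edge `e ∉ S'`,
`f(S''+e) − f(S'') ≥ f(S'+e) − f(S')`. -/
theorem statement5 (n : ℕ) (γ : KE n → ℤ × ℤ)
    (S' S'' : Finset (KE n)) (hsub : S'' ⊆ S') (e : KE n) (he : e ∉ S') :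
    fZ (Kt n) (Kh n) γ (insert e S') - fZ (Kt n) (Kh n) γ S' ≤
      fZ (Kt n) (Kh n) γ (insert e S'') - fZ (Kt n) (Kh n) γ S'' := by
  classical
  have key : ∀ S : Finset (KE n), fZ (Kt n) (Kh n) γ S
      = (Fintype.card (Fin n) : ℤ) + (zrank (Kt n) (Kh n) γ S : ℤ)
        - (NF (Kt n) (Kh n) S : ℤ) := by
    intro S
    have h := NF_add_card (Kt n) (Kh n) S
    have h' : (NF (Kt n) (Kh n) S : ℤ) + ((verts (Kt n) (Kh n) S).card : ℤ)
        = (ncomp (Kt n) (Kh n) S : ℤ) + (Fintype.card (Fin n) : ℤ) := by exact_mod_cast h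
    unfold fZ
    linarith
  rw [key, key, key, key]
  have hsubi : insert e S'' ⊆ insert e S' := Finset.insert_subset_insert _ hsub
  have he'' : e ∉ S'' := fun h => he (hsub h)
  by_cases h2 : Relation.EqvGen (adjS (Kt n) (Kh n) S'') (Kt n e) (Kh n e)
  · have h1 : Relation.EqvGen (adjS (Kt n) (Kh n) S') (Kt n e) (Kh n e) :=
      Relation.EqvGen.mono (fun a b hab => adjS_mono _ _ hsub hab) _ _ h2
    obtain ⟨C, hC, hCe⟩ := exists_fund (Kt n) (Kh n) he'' h2
    have hC' : IsCycle (Kt n) (Kh n) (insert e S') C := isCycle_mono _ _ hsubi hC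
    have hN1 := NF_insert_of_rel (Kt n) (Kh n) (e := e) h1
    have hN2 := NF_insert_of_rel (Kt n) (Kh n) (e := e) h2
    by_cases hv : q2 (rho γ C) ∈ Wsp (Kt n) (Kh n) γ S''
    · have e1 := zrank_insert_eq (Kt n) (Kh n) γ hC' hCe (Wsp_mono _ _ γ hsub hv)
      have e2 := zrank_insert_eq (Kt n) (Kh n) γ hC hCe hv
      rw [hN1, hN2, e1, e2]
      push_cast
      omega
    · have e1 := zrank_insert_le (Kt n) (Kh n) γ hC' hCe
      have e2 := zrank_insert_ge (Kt n) (Kh n) γ hC hCe hv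
      rw [hN1, hN2]
      push_cast
      omega
  · by_cases h1 : Relation.EqvGen (adjS (Kt n) (Kh n) S') (Kt n e) (Kh n e)
    · obtain ⟨C, hC, hCe⟩ := exists_fund (Kt n) (Kh n) he h1
      have e1 := zrank_insert_le (Kt n) (Kh n) γ hC hCe
      have hN1 := NF_insert_of_rel (Kt n) (Kh n) (e := e) h1
      have hN2 := NF_insert_of_not_rel (Kt n) (Kh n) (e := e) h2
      have e2 : zrank (Kt n) (Kh n) γ (insert e S'') = zrank (Kt n) (Kh n) γ S'' := by
        rw [zrank_eq_Wsp, zrank_eq_Wsp, wsp_insert_of_not_rel _ _ γ h2]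
      rw [hN1, e2]
      push_cast
      omega
    · have hN1 := NF_insert_of_not_rel (Kt n) (Kh n) (e := e) h1
      have hN2 := NF_insert_of_not_rel (Kt n) (Kh n) (e := e) h2
      have e1 : zrank (Kt n) (Kh n) γ (insert e S') = zrank (Kt n) (Kh n) γ S' := by
        rw [zrank_eq_Wsp, zrank_eq_Wsp, wsp_insert_of_not_rel _ _ γ h1]
      have e2 : zrank (Kt n) (Kh n) γ (insert e S'') = zrank (Kt n) (Kh n) γ S'' := by
        rw [zrank_eq_Wsp, zrank_eq_Wsp, wsp_insert_of_not_rel _ _ γ h2]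
      rw [e1, e2]
      push_cast
      omega
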